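/- For every integer k ≥ 1: the list chromatic number of C_{2k+2} □ P_1 equals 2, and for every n ≥ 2 the list chromatic number of C_{2k+2} □ P_n equals 3. -/

import Mathlib

open SimpleGraph Finset

attribute [local instance] Classical.propDecidable

namespace ATPaper

/-- An orientation of a simple graph: each edge receives exactly one direction,
and arcs only exist along edges. -/
structure GraphOrientation {V : Type*} (G : SimpleGraph V) where
  arc : V → V → Prop
  arc_adj : ∀ u v, arc u v → G.Adj u v
  adj_arc : ∀ u v, G.Adj u v → (arc u v ↔ ¬ arc v u)

variable {V : Type*} [Fintype V]

/-- The set of arcs of an orientation. -/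
noncomputable def GraphOrientation.arcs {G : SimpleGraph V} (D : GraphOrientation G) :
    Finset (V × V) :=
  Finset.univ.filter fun p => D.arc p.1 p.2

/-- In-degree of a vertex in a finite set of arcs. -/
noncomputable def indeg (F : Finset (V × V)) (v : V) : ℕ :=
  (F.filter fun p => p.2 = v).card

/-- Out-degree of a vertex in a finite set of arcs. -/
noncomputable def outdeg (F : Finset (V × V)) (v : V) : ℕ :=
  (F.filter fun p => p.1 = v).card

/-- The circulations contained in an orientation `D`: spanning subdigraphs (sets of
arcs of `D`) in which every vertex has in-degree equal to out-degree. -/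
noncomputable def circulations {G : SimpleGraph V} (D : GraphOrientation G) :
    Finset (Finset (V × V)) :=
  D.arcs.powerset.filter fun F => ∀ v, indeg F v = outdeg F v

/-- `G` has an Alon–Tarsi orientation witnessing the bound `k`: an orientation with
maximum in-degree at most `k - 1` in which the numbers of even and odd circulations
differ. -/
noncomputable def HasATOrientation (G : SimpleGraph V) (k : ℕ) : Prop :=
  ∃ D : GraphOrientation G,
    (∀ v, indeg D.arcs v + 1 ≤ k) ∧
    ((circulations D).filter fun F => Even F.card).card ≠
      ((circulations D).filter fun F => Odd F.card).card

/-- The Alon–Tarsi number of `G`. -/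
noncomputable def alonTarsiNumber (G : SimpleGraph V) : ℕ :=
  sInf {k | HasATOrientation G k}

/-- `G` admits a proper coloring from the list assignment `L`. -/
def Choosable {W : Type*} (G : SimpleGraph W) (L : W → Finset ℕ) : Prop :=
  ∃ f : W → ℕ, (∀ v, f v ∈ L v) ∧ ∀ u v, G.Adj u v → f u ≠ f v

/-- `G` is `k`-choosable: colorable from every list assignment with lists of size at
least `k`. -/
def IsKChoosable {W : Type*} (G : SimpleGraph W) (k : ℕ) : Prop :=
  ∀ L : W → Finset ℕ, (∀ v, k ≤ (L v).card) → Choosable G L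

/-- The list chromatic number of `G`. -/
noncomputable def listChromaticNumber {W : Type*} (G : SimpleGraph W) : ℕ :=
  sInf {k | IsKChoosable G k}

/-- The `r`-th power of a graph: distinct vertices are adjacent iff their distance
is at most `r`. -/
def graphPower {W : Type*} (G : SimpleGraph W) (r : ℕ) : SimpleGraph W where
  Adj u v := u ≠ v ∧ G.Reachable u v ∧ G.dist u v ≤ r
  symm := ⟨by
    rintro u v ⟨h1, h2, h3⟩
    exact ⟨h1.symm, h2.symm, by rwa [SimpleGraph.dist_comm]⟩⟩
  loopless := ⟨by rintro v ⟨h1, -, -⟩; exact h1 rfl⟩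

/-- The join of two vertex-disjoint graphs. -/
def joinGraph {A B : Type*} (G : SimpleGraph A) (H : SimpleGraph B) :
    SimpleGraph (A ⊕ B) where
  Adj x y :=
    match x, y with
    | Sum.inl a, Sum.inl b => G.Adj a b
    | Sum.inr a, Sum.inr b => H.Adj a b
    | Sum.inl _, Sum.inr _ => True
    | Sum.inr _, Sum.inl _ => True
  symm := ⟨by
    rintro (a | a) (b | b) h
    · exact G.adj_symm h
    · trivial
    · trivial
    · exact H.adj_symm h⟩
  loopless := ⟨by
    rintro (a | a) h
    · exact G.ne_of_adj h rfl
    · exact H.ne_of_adj h rfl⟩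


open scoped Fin.NatCast Fin.IntCast Fin.CommRing

noncomputable def pick (s : Finset ℕ) (x : ℕ) : ℕ :=
  if h : (s.erase x).Nonempty then h.choose else 0

lemma pick_spec {s : Finset ℕ} (hs : 2 ≤ s.card) (x : ℕ) :
    pick s x ∈ s ∧ pick s x ≠ x := by
  have hne : (s.erase x).Nonempty := by
    rw [← Finset.card_pos]
    have := Finset.pred_card_le_card_erase (s := s) (a := x)
    omega
  have h := hne.choose_spec
  rw [Finset.mem_erase] at h
  simp only [pick, dif_pos hne]
  exact ⟨h.2, h.1⟩

lemma cycle_greedy {n : ℕ} (L : Fin (n+2) → Finset ℕ) (hL : ∀ v, 2 ≤ (L v).card)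
    (i : Fin (n+2)) (c : ℕ) (hc : c ∈ L i) (hc' : c ∉ L (i+1)) :
    ∃ f : Fin (n+2) → ℕ, (∀ v, f v ∈ L v) ∧
      ∀ u v, (cycleGraph (n+2)).Adj u v → f u ≠ f v := by
  set h : ℕ → ℕ := fun t =>
    Nat.rec c (fun s hs => pick (L (i - ((s+1 : ℕ) : Fin (n+2)))) hs) t with hdef
  have hmem : ∀ t : ℕ, h t ∈ L (i - (t : Fin (n+2))) := by
    intro t
    cases t with
    | zero => show c ∈ _; simpa using hc
    | succ s => exact (pick_spec (hL _) _).1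
  have hne : ∀ s : ℕ, h (s+1) ≠ h s := fun s => (pick_spec (hL _) _).2
  refine ⟨fun v => h ((i - v).val), fun v => ?_, ?_⟩
  · have hm := hmem ((i - v).val)
    rwa [Fin.cast_val_eq_self, sub_sub_cancel] at hm
  · have key : ∀ u v : Fin (n+2), v = u + 1 → h ((i-u).val) ≠ h ((i-v).val) := by
      intro u v hv
      have hu : i - u = (i - v) + 1 := by rw [hv]; ring
      by_cases h0 : i - v = Fin.last (n+1)
      · have hiu : i - u = 0 := by rw [hu, h0, Fin.last_add_one]
        have hvi : v = i + 1 := by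
          have h2 : i - v = -1 := by
            rw [h0]
            exact eq_neg_of_add_eq_zero_left (Fin.last_add_one (n+1))
          rw [sub_eq_iff_eq_add] at h2
          rw [h2]; ring
        intro heq
        apply hc'
        rw [← hvi]
        have hm := hmem ((i - v).val)
        rw [Fin.cast_val_eq_self, sub_sub_cancel] at hm
        rw [hiu] at heq
        simp only [Fin.val_zero] at heq
        have hc0 : h 0 = c := rfl
        rw [hc0] at heq
        rwa [← heq] at hm
      · have hval : (i - u).val = (i - v).val + 1 := by
          rw [hu, Fin.val_add_one, if_neg h0]
        rw [hval]
        exact hne _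
    intro u v hadj
    rw [cycleGraph_adj] at hadj
    rcases hadj with h1 | h1
    · exact (key v u (by rw [sub_eq_iff_eq_add] at h1; rw [h1]; ring)).symm
    · exact key u v (by rw [sub_eq_iff_eq_add] at h1; rw [h1]; ring)


lemma cycle_greedy' {n : ℕ} (L : Fin (n+2) → Finset ℕ) (hL : ∀ v, 2 ≤ (L v).card)
    (i : Fin (n+2)) (c : ℕ) (hc : c ∈ L (i+1)) (hc' : c ∉ L i) :
    ∃ f : Fin (n+2) → ℕ, (∀ v, f v ∈ L v) ∧
      ∀ u v, (cycleGraph (n+2)).Adj u v → f u ≠ f v := by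
  obtain ⟨f, hf1, hf2⟩ := cycle_greedy (fun j => L (-j)) (fun v => hL _) (-(i+1)) c
    (by simpa using hc)
    (by show c ∉ L (-(-(i+1)+1)); rw [show -(-(i+1)+1) = i from by ring]; exact hc')
  refine ⟨fun v => f (-v), fun v => by simpa using hf1 (-v), ?_⟩
  intro u v hadj
  apply hf2 (-u) (-v)
  rw [cycleGraph_adj] at hadj ⊢
  rw [show -u - -v = v - u from by ring, show -v - -u = u - v from by ring]
  tauto

lemma evenCycle_choosable (k : ℕ) (L : Fin (2*k+2) → Finset ℕ) (hL : ∀ v, 2 ≤ (L v).card) :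
    ∃ f : Fin (2*k+2) → ℕ, (∀ v, f v ∈ L v) ∧
      ∀ u v, (cycleGraph (2*k+2)).Adj u v → f u ≠ f v := by
  by_cases hall : ∀ j : Fin (2*k+2), L j = L (j+1)
  · have hall0 : ∀ j, L j = L 0 := by
      have key : ∀ t : ℕ, L ((t : ℕ) : Fin (2*k+2)) = L 0 := by
        intro t
        induction t with
        | zero => norm_num
        | succ s ih => rw [Nat.cast_add, Nat.cast_one, ← hall, ih]
      intro j; rw [← Fin.cast_val_eq_self j]; exact key j.val
    obtain ⟨a, ha, b, hb, hab⟩ := Finset.one_lt_card.mp (show 1 < (L 0).card by have := hL 0; omega)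
    refine ⟨fun v => if Even v.val then a else b, fun v => ?_, ?_⟩
    · rw [hall0 v]; dsimp only; split <;> assumption
    · have key : ∀ u v : Fin (2*k+2), v = u + 1 →
          (if Even u.val then a else b) ≠ (if Even v.val then a else b) := by
        intro u v hv
        have hval : v.val = if u = Fin.last (2*k+1) then 0 else u.val + 1 := by
          rw [hv]; exact Fin.val_add_one u
        by_cases hu : u = Fin.last (2*k+1)
        · rw [if_pos hu] at hval
          have hu2 : u.val = 2*k+1 := by rw [hu]; rfl
          rw [hval, hu2]
          rw [if_neg (by rw [Nat.even_iff]; omega), if_pos (by simp)]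
          exact hab.symm
        · rw [if_neg hu] at hval
          rw [hval]
          by_cases he : Even u.val <;>
            simp [he, Nat.even_add_one, hab, hab.symm]
      intro u v hadj
      rw [cycleGraph_adj] at hadj
      rcases hadj with h1 | h1
      · exact (key v u (by rw [sub_eq_iff_eq_add] at h1; rw [h1]; ring)).symm
      · exact key u v (by rw [sub_eq_iff_eq_add] at h1; rw [h1]; ring)
  · push_neg at hall
    obtain ⟨j, hj⟩ := hall
    by_cases hsub : L j ⊆ L (j+1)
    · have hns : ¬ L (j+1) ⊆ L j := fun h => hj (Finset.Subset.antisymm hsub h)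
      obtain ⟨c, hc1, hc2⟩ := Finset.not_subset.mp hns
      exact cycle_greedy' L hL j c hc1 hc2
    · obtain ⟨c, hc1, hc2⟩ := Finset.not_subset.mp hsub
      exact cycle_greedy L hL j c hc1 hc2


lemma isKChoosable_mono {W : Type*} (G : SimpleGraph W) {a b : ℕ} (h : a ≤ b)
    (H : IsKChoosable G a) : IsKChoosable G b :=
  fun L hL => H L (fun v => le_trans h (hL v))

lemma listChromaticNumber_eq {W : Type*} (G : SimpleGraph W) (t : ℕ)
    (h1 : IsKChoosable G t) (h2 : ¬ IsKChoosable G (t-1)) :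
    listChromaticNumber G = t := by
  apply le_antisymm
  · exact Nat.sInf_le h1
  · apply le_csInf ⟨t, by exact h1⟩
    intro b hb
    by_contra hlt
    push_neg at hlt
    exact h2 (isKChoosable_mono G (by omega) hb)

lemma product_choosable (k n : ℕ) (hn : 1 ≤ n)
    (L : Fin (2*k+2) × Fin n → Finset ℕ) (hL : ∀ v, 3 ≤ (L v).card) :
    Choosable (cycleGraph (2*k+2) □ pathGraph n) L := by
  haveI : NeZero n := ⟨by omega⟩
  have step : ∀ (j : ℕ) (prev : Fin (2*k+2) → ℕ),
      ∃ f : Fin (2*k+2) → ℕ,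
        (∀ i, f i ∈ (L (i, ((j+1 : ℕ) : Fin n))).erase (prev i)) ∧
        ∀ u v, (cycleGraph (2*k+2)).Adj u v → f u ≠ f v := by
    intro j prev
    refine evenCycle_choosable k (fun i => (L (i, ((j+1 : ℕ) : Fin n))).erase (prev i))
      (fun i => ?_)
    have h1 := hL (i, ((j+1 : ℕ) : Fin n))
    have h2 := Finset.pred_card_le_card_erase
      (s := L (i, ((j+1 : ℕ) : Fin n))) (a := prev i)
    omega
  obtain ⟨g0, hg0, hg0'⟩ := evenCycle_choosable k (fun i => L (i, ((0 : ℕ) : Fin n)))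
    (fun i => by have := hL (i, ((0 : ℕ) : Fin n)); omega)
  set g : ℕ → Fin (2*k+2) → ℕ :=
    fun j => Nat.rec g0 (fun j gj => (step j gj).choose) j with hg
  have gmem : ∀ (j : ℕ) (i : Fin (2*k+2)), g j i ∈ L (i, (j : Fin n)) := by
    intro j i
    cases j with
    | zero => exact hg0 i
    | succ s => exact Finset.mem_of_mem_erase (((step s (g s)).choose_spec).1 i)
  have gproper : ∀ (j : ℕ) (u v : Fin (2*k+2)),
      (cycleGraph (2*k+2)).Adj u v → g j u ≠ g j v := by
    intro j
    cases j with
    | zero => exact hg0'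
    | succ s => exact ((step s (g s)).choose_spec).2
  have gstep : ∀ (j : ℕ) (i : Fin (2*k+2)), g (j+1) i ≠ g j i := by
    intro j i
    exact Finset.ne_of_mem_erase (((step j (g j)).choose_spec).1 i)
  refine ⟨fun p => g p.2.val p.1, fun p => ?_, ?_⟩
  · have := gmem p.2.val p.1
    rwa [Fin.cast_val_eq_self] at this
  · rintro ⟨a, x⟩ ⟨b, y⟩ hadj
    rw [boxProd_adj] at hadj
    rcases hadj with ⟨hc, h2⟩ | ⟨hp, h1⟩
    · simp only at h2 ⊢
      rw [← h2]
      exact gproper x.val a b hc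
    · simp only at h1 ⊢
      rw [pathGraph_adj] at hp
      rcases hp with hp | hp
      · rw [h1, ← hp]
        exact (gstep x.val b).symm
      · rw [h1, ← hp]
        exact gstep y.val b


lemma theta_not_two_choosable {W : Type*} (G : SimpleGraph W) (u w pa pb pc pd : W)
    (hwu : w ≠ u) (hpau : pa ≠ u) (hpaw : pa ≠ w)
    (hpbu : pb ≠ u) (hpbw : pb ≠ w) (hpbpa : pb ≠ pa)
    (hpcu : pc ≠ u) (hpcw : pc ≠ w) (hpcpa : pc ≠ pa) (hpcpb : pc ≠ pb)
    (hpdu : pd ≠ u) (hpdw : pd ≠ w) (hpdpa : pd ≠ pa) (hpdpb : pd ≠ pb) (hpdpc : pd ≠ pc)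
    (a1 : G.Adj u pa) (a2 : G.Adj pa pb) (a3 : G.Adj pb w) (a4 : G.Adj u w)
    (a5 : G.Adj u pc) (a6 : G.Adj pc pd) (a7 : G.Adj pd w) :
    ¬ IsKChoosable G 2 := by
  intro H
  set L : W → Finset ℕ := fun p =>
    if p = u then {1,2} else if p = w then {1,2} else if p = pa then {1,3}
    else if p = pb then {2,3} else if p = pc then {2,3} else if p = pd then {1,3}
    else {4,5} with hLdef
  have hcard : ∀ v, 2 ≤ (L v).card := by
    intro v
    rw [hLdef]
    dsimp only
    split_ifs <;> simp
  obtain ⟨f, hf1, hf2⟩ := H L hcard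
  have hLu : L u = {1,2} := by rw [hLdef]; dsimp only; exact if_pos rfl
  have hLw : L w = {1,2} := by
    rw [hLdef]; dsimp only; rw [if_neg hwu]; exact if_pos rfl
  have hLpa : L pa = {1,3} := by
    rw [hLdef]; dsimp only; rw [if_neg hpau, if_neg hpaw]; exact if_pos rfl
  have hLpb : L pb = {2,3} := by
    rw [hLdef]; dsimp only; rw [if_neg hpbu, if_neg hpbw, if_neg hpbpa]; exact if_pos rfl
  have hLpc : L pc = {2,3} := by
    rw [hLdef]; dsimp only
    rw [if_neg hpcu, if_neg hpcw, if_neg hpcpa, if_neg hpcpb]; exact if_pos rfl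
  have hLpd : L pd = {1,3} := by
    rw [hLdef]; dsimp only
    rw [if_neg hpdu, if_neg hpdw, if_neg hpdpa, if_neg hpdpb, if_neg hpdpc]; exact if_pos rfl
  have mu := hf1 u; rw [hLu] at mu; simp only [Finset.mem_insert, Finset.mem_singleton] at mu
  have mw := hf1 w; rw [hLw] at mw; simp only [Finset.mem_insert, Finset.mem_singleton] at mw
  have mpa := hf1 pa; rw [hLpa] at mpa; simp only [Finset.mem_insert, Finset.mem_singleton] at mpa
  have mpb := hf1 pb; rw [hLpb] at mpb; simp only [Finset.mem_insert, Finset.mem_singleton] at mpb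
  have mpc := hf1 pc; rw [hLpc] at mpc; simp only [Finset.mem_insert, Finset.mem_singleton] at mpc
  have mpd := hf1 pd; rw [hLpd] at mpd; simp only [Finset.mem_insert, Finset.mem_singleton] at mpd
  have e1 := hf2 _ _ a1
  have e2 := hf2 _ _ a2
  have e3 := hf2 _ _ a3
  have e4 := hf2 _ _ a4
  have e5 := hf2 _ _ a5
  have e6 := hf2 _ _ a6
  have e7 := hf2 _ _ a7
  omega

lemma not_two_choosable (k n : ℕ) (hk : 1 ≤ k) (hn : 2 ≤ n) :
    ¬ IsKChoosable (cycleGraph (2*k+2) □ pathGraph n) 2 := by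
  have h0 : (0:ℕ) < 2*k+2 := by omega
  have h1 : (1:ℕ) < 2*k+2 := by omega
  have h2 : (2:ℕ) < 2*k+2 := by omega
  have g0 : (0:ℕ) < n := by omega
  have g1 : (1:ℕ) < n := by omega
  have hcyc01 : (cycleGraph (2*k+2)).Adj ⟨0, h0⟩ ⟨1, h1⟩ := by
    rw [cycleGraph_adj']
    right
    rw [Fin.sub_def]
    show (2*k+2 - 0 + 1) % (2*k+2) = 1
    rw [show 2*k+2 - 0 + 1 = 1 + (2*k+2)*1 from by omega, Nat.add_mul_mod_self_left,
      Nat.mod_eq_of_lt h1]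
  have hcyc12 : (cycleGraph (2*k+2)).Adj ⟨1, h1⟩ ⟨2, h2⟩ := by
    rw [cycleGraph_adj']
    right
    rw [Fin.sub_def]
    show (2*k+2 - 1 + 2) % (2*k+2) = 1
    rw [show 2*k+2 - 1 + 2 = 1 + (2*k+2)*1 from by omega, Nat.add_mul_mod_self_left,
      Nat.mod_eq_of_lt h1]
  have hpath : (pathGraph n).Adj ⟨0, g0⟩ ⟨1, g1⟩ := by
    rw [pathGraph_adj]; left; simp
  exact theta_not_two_choosable (cycleGraph (2*k+2) □ pathGraph n)
    (⟨1, h1⟩, ⟨0, g0⟩) (⟨1, h1⟩, ⟨1, g1⟩) (⟨0, h0⟩, ⟨0, g0⟩) (⟨0, h0⟩, ⟨1, g1⟩)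
    (⟨2, h2⟩, ⟨0, g0⟩) (⟨2, h2⟩, ⟨1, g1⟩)
    (by simp [Prod.ext_iff, Fin.ext_iff]) (by simp [Prod.ext_iff, Fin.ext_iff])
    (by simp [Prod.ext_iff, Fin.ext_iff]) (by simp [Prod.ext_iff, Fin.ext_iff])
    (by simp [Prod.ext_iff, Fin.ext_iff]) (by simp [Prod.ext_iff, Fin.ext_iff])
    (by simp [Prod.ext_iff, Fin.ext_iff]) (by simp [Prod.ext_iff, Fin.ext_iff])
    (by simp [Prod.ext_iff, Fin.ext_iff]) (by simp [Prod.ext_iff, Fin.ext_iff])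
    (by simp [Prod.ext_iff, Fin.ext_iff]) (by simp [Prod.ext_iff, Fin.ext_iff])
    (by simp [Prod.ext_iff, Fin.ext_iff]) (by simp [Prod.ext_iff, Fin.ext_iff])
    (by simp [Prod.ext_iff, Fin.ext_iff])
    (Or.inl ⟨hcyc01.symm, rfl⟩) (Or.inr ⟨hpath, rfl⟩) (Or.inl ⟨hcyc01, rfl⟩)
    (Or.inr ⟨hpath, rfl⟩) (Or.inl ⟨hcyc12, rfl⟩) (Or.inr ⟨hpath, rfl⟩)
    (Or.inl ⟨hcyc12.symm, rfl⟩)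

lemma choosable_cycle_p1 (k : ℕ) :
    IsKChoosable (cycleGraph (2*k+2) □ pathGraph 1) 2 := by
  intro L hL
  obtain ⟨f, h1, h2⟩ := evenCycle_choosable k (fun i => L (i, 0))
    (fun i => by exact hL (i, 0))
  refine ⟨fun p => f p.1, fun p => ?_, ?_⟩
  · have h0 : p.2 = 0 := Subsingleton.elim _ _
    have h3 : f p.1 ∈ L (p.1, 0) := h1 p.1
    rwa [← h0] at h3
  · rintro ⟨a, x⟩ ⟨b, y⟩ hadj
    rw [boxProd_adj] at hadj
    rcases hadj with ⟨hc, _⟩ | ⟨hp, _⟩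
    · exact h2 _ _ hc
    · exfalso
      rw [pathGraph_adj] at hp
      have hx := x.isLt
      have hy := y.isLt
      omega

lemma not_one_choosable_cycle_p1 (k : ℕ) :
    ¬ IsKChoosable (cycleGraph (2*k+2) □ pathGraph 1) 1 := by
  intro H
  obtain ⟨f, h1, h2⟩ := H (fun _ => {0}) (fun v => by simp)
  have h0 : (0:ℕ) < 2*k+2 := by omega
  have h1' : (1:ℕ) < 2*k+2 := by omega
  have hcyc : (cycleGraph (2*k+2)).Adj ⟨0, h0⟩ ⟨1, h1'⟩ := by
    rw [cycleGraph_adj']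
    right
    rw [Fin.sub_def]
    show (2*k+2 - 0 + 1) % (2*k+2) = 1
    rw [show 2*k+2 - 0 + 1 = 1 + (2*k+2)*1 from by omega, Nat.add_mul_mod_self_left,
      Nat.mod_eq_of_lt h1']
  have hadj : (cycleGraph (2*k+2) □ pathGraph 1).Adj (⟨0, h0⟩, 0) (⟨1, h1'⟩, 0) :=
    Or.inl ⟨hcyc, rfl⟩
  have e := h2 _ _ hadj
  have m1 := h1 (⟨0, h0⟩, 0)
  have m2 := h1 (⟨1, h1'⟩, 0)
  simp only [Finset.mem_singleton] at m1 m2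
  rw [m1, m2] at e
  exact e rfl

/-- For every integer `k ≥ 1`: the list chromatic number of `C_{2k+2} □ P_1` equals `2`,
and for every `n ≥ 2` the list chromatic number of `C_{2k+2} □ P_n` equals `3`. -/
theorem listChromaticNumber_evenCycle_boxProd_path (k : ℕ) (hk : 1 ≤ k) :
    listChromaticNumber (cycleGraph (2 * k + 2) □ pathGraph 1) = 2 ∧
    ∀ n : ℕ, 2 ≤ n → listChromaticNumber (cycleGraph (2 * k + 2) □ pathGraph n) = 3 := by
  constructor
  · exact listChromaticNumber_eq _ 2 (choosable_cycle_p1 k) (not_one_choosable_cycle_p1 k)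
  · intro n hn
    refine listChromaticNumber_eq _ 3 ?_ ?_
    · intro L hL
      exact product_choosable k n (by omega) L hL
    · exact not_two_choosable k n hk hn



end ATPaper
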